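/- Let P be a Köthe set satisfying condition (P3) (for every p ∈ P there exist q ∈ P and C > 0 with p_i ≤ C q_i² for all i). Then the Köthe space λ(P) = { x ∈ ℂ^ℕ : ‖x‖_p = Σ_n |x_n| p_n < ∞ for all p ∈ P } is closed under pointwise multiplication, and with pointwise multiplication λ(P) is an algebra with jointly continuous multiplication: for each p ∈ P there exist q ∈ P and C > 0 with ‖xy‖_p ≤ C ‖x‖_q ‖y‖_q for all x, y ∈ λ(P). -/
import Mathlib

lemma kothe_aux_summable {a b : ℕ → ℝ} (ha : ∀ n, 0 ≤ a n) (hb : ∀ n, 0 ≤ b n)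
    (hsa : Summable a) (hsb : Summable b) :
    Summable (fun n => a n * b n) := by
  refine (hsa.mul_right (∑' n, b n)).of_nonneg_of_le
    (fun n => mul_nonneg (ha n) (hb n)) (fun n => ?_)
  exact mul_le_mul_of_nonneg_left (Summable.le_tsum hsb n (fun m _ => hb m)) (ha n)

lemma kothe_aux_tsum {a b : ℕ → ℝ} (ha : ∀ n, 0 ≤ a n) (hb : ∀ n, 0 ≤ b n)
    (hsa : Summable a) (hsb : Summable b) :
    (∑' n, a n * b n) ≤ (∑' n, a n) * (∑' n, b n) := by
  calc (∑' n, a n * b n) ≤ ∑' n, a n * (∑' m, b m) := by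
        refine Summable.tsum_le_tsum (fun n => ?_) (kothe_aux_summable ha hb hsa hsb)
          (hsa.mul_right _)
        exact mul_le_mul_of_nonneg_left (Summable.le_tsum hsb n (fun m _ => hb m)) (ha n)
    _ = (∑' n, a n) * (∑' n, b n) := tsum_mul_right

/-- For a Köthe set `P` satisfying (P1), (P2) and (P3), the Köthe space
`λ(P) = {x : Σ ‖xₙ‖ pₙ < ∞ ∀ p ∈ P}` is closed under pointwise multiplication, and
multiplication is jointly continuous: for every `p ∈ P` there are `q ∈ P` and `C > 0`
with `‖xy‖_p ≤ C ‖x‖_q ‖y‖_q`. -/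
theorem kothe_algebra_mul_closed_and_jointly_continuous
    (P : Set (ℕ → ℝ))
    (hpos : ∀ p ∈ P, ∀ i, 0 ≤ p i)
    (hP1 : ∀ i, ∃ p ∈ P, 0 < p i)
    (hP2 : ∀ p ∈ P, ∀ q ∈ P, ∃ r ∈ P, ∀ i, max (p i) (q i) ≤ r i)
    (hP3 : ∀ p ∈ P, ∃ q ∈ P, ∃ C > (0 : ℝ), ∀ i, p i ≤ C * (q i) ^ 2) :
    (∀ x y : ℕ → ℂ,
      (∀ p ∈ P, Summable fun n => ‖x n‖ * p n) →
      (∀ p ∈ P, Summable fun n => ‖y n‖ * p n) →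
      (∀ p ∈ P, Summable fun n => ‖x n * y n‖ * p n)) ∧
    (∀ p ∈ P, ∃ q ∈ P, ∃ C > (0 : ℝ), ∀ x y : ℕ → ℂ,
      (∀ p' ∈ P, Summable fun n => ‖x n‖ * p' n) →
      (∀ p' ∈ P, Summable fun n => ‖y n‖ * p' n) →
      (∑' n, ‖x n * y n‖ * p n) ≤ C * (∑' n, ‖x n‖ * q n) * (∑' n, ‖y n‖ * q n)) := by
  have key : ∀ p ∈ P, ∀ (q : ℕ → ℝ), q ∈ P → ∀ C > (0 : ℝ),
      (∀ i, p i ≤ C * (q i) ^ 2) →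
      ∀ x y : ℕ → ℂ, ∀ n, ‖x n * y n‖ * p n ≤ C * ((‖x n‖ * q n) * (‖y n‖ * q n)) := by
    intro p hp q hq C hC hle x y n
    rw [norm_mul]
    have hq0 := hpos q hq n
    calc ‖x n‖ * ‖y n‖ * p n ≤ ‖x n‖ * ‖y n‖ * (C * q n ^ 2) :=
          mul_le_mul_of_nonneg_left (hle n)
            (mul_nonneg (norm_nonneg _) (norm_nonneg _))
      _ = C * ((‖x n‖ * q n) * (‖y n‖ * q n)) := by ring
  constructor
  · intro x y hx hy p hp
    obtain ⟨q, hq, C, hC, hle⟩ := hP3 p hp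
    have hxs := hx q hq
    have hys := hy q hq
    have hsum : Summable (fun n => C * ((‖x n‖ * q n) * (‖y n‖ * q n))) :=
      (kothe_aux_summable (fun n => mul_nonneg (norm_nonneg _) (hpos q hq n))
        (fun n => mul_nonneg (norm_nonneg _) (hpos q hq n)) hxs hys).mul_left C
    exact hsum.of_nonneg_of_le
      (fun n => mul_nonneg (norm_nonneg _) (hpos p hp n))
      (fun n => key p hp q hq C hC hle x y n)
  · intro p hp
    obtain ⟨q, hq, C, hC, hle⟩ := hP3 p hp
    refine ⟨q, hq, C, hC, fun x y hx hy => ?_⟩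
    have hxs := hx q hq
    have hys := hy q hq
    have hax : ∀ n, 0 ≤ ‖x n‖ * q n := fun n => mul_nonneg (norm_nonneg _) (hpos q hq n)
    have hay : ∀ n, 0 ≤ ‖y n‖ * q n := fun n => mul_nonneg (norm_nonneg _) (hpos q hq n)
    have hsum : Summable (fun n => C * ((‖x n‖ * q n) * (‖y n‖ * q n))) :=
      (kothe_aux_summable hax hay hxs hys).mul_left C
    calc (∑' n, ‖x n * y n‖ * p n)
        ≤ ∑' n, C * ((‖x n‖ * q n) * (‖y n‖ * q n)) := by
          refine Summable.tsum_le_tsum (fun n => key p hp q hq C hC hle x y n) ?_ hsum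
          exact hsum.of_nonneg_of_le
            (fun n => mul_nonneg (norm_nonneg _) (hpos p hp n))
            (fun n => key p hp q hq C hC hle x y n)
      _ = C * ∑' n, (‖x n‖ * q n) * (‖y n‖ * q n) := tsum_mul_left
      _ ≤ C * ((∑' n, ‖x n‖ * q n) * (∑' n, ‖y n‖ * q n)) :=
          mul_le_mul_of_nonneg_left (kothe_aux_tsum hax hay hxs hys) hC.le
      _ = C * (∑' n, ‖x n‖ * q n) * (∑' n, ‖y n‖ * q n) := by ring
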